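/- (Matchmaking phase transition.) Let κ > 0 and r > 0, and define C(η) = κ(1/(1−η) − 1) for η ∈ [0,1) and J(η) = η r² − C(η). Then J is strictly concave on [0,1) and its unique maximizer over [0,1) is η*(r) = max(0, 1 − √κ / r). In particular η*(r) = 0 whenever r ≤ √κ, and η*(r) = 1 − √κ/r ∈ (0,1) whenever r > √κ. -/

import Mathlib

/-- **Matchmaking phase transition.** Let `κ > 0`, `r > 0`,
`C(η) = κ(1/(1−η) − 1)` and `J(η) = ηr² − C(η)` on `[0,1)`. Then `J` is
strictly concave on `[0,1)` and its unique maximizer over `[0,1)` is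
`η*(r) = max(0, 1 − √κ/r)`; in particular `η* = 0` when `r ≤ √κ`, and
`η* = 1 − √κ/r ∈ (0,1)` when `r > √κ`. -/
theorem matchmaking_phase_transition
    (κ r : ℝ) (hκ : 0 < κ) (hr : 0 < r) :
    letI J : ℝ → ℝ := fun η => η * r ^ 2 - κ * (1 / (1 - η) - 1)
    letI ηstar : ℝ := max 0 (1 - Real.sqrt κ / r)
    StrictConcaveOn ℝ (Set.Ico 0 1) J ∧
    ηstar ∈ Set.Ico (0 : ℝ) 1 ∧
    (∀ η ∈ Set.Ico (0 : ℝ) 1, η ≠ ηstar → J η < J ηstar) ∧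
    (r ≤ Real.sqrt κ → ηstar = 0) ∧
    (Real.sqrt κ < r →
      ηstar = 1 - Real.sqrt κ / r ∧ 0 < ηstar ∧ ηstar < 1) := by
  simp only []
  set J : ℝ → ℝ := fun η => η * r ^ 2 - κ * (1 / (1 - η) - 1) with hJ
  set ηstar : ℝ := max 0 (1 - Real.sqrt κ / r) with hηstar
  set s := Real.sqrt κ with hs
  have hspos : 0 < s := Real.sqrt_pos.mpr hκ
  have hκs : κ = s ^ 2 := (Real.sq_sqrt hκ.le).symm
  have hstar0 : r ≤ s → ηstar = 0 := by
    intro h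
    have : 1 - s / r ≤ 0 := by
      have : (1 : ℝ) ≤ s / r := (one_le_div hr).mpr h
      linarith
    exact max_eq_left this
  have hstar1 : s < r → ηstar = 1 - s / r := by
    intro h
    have h1 : s / r < 1 := (div_lt_one hr).mpr h
    exact max_eq_right (by linarith)
  have hmem : ηstar ∈ Set.Ico (0:ℝ) 1 := by
    constructor
    · exact le_max_left _ _
    · refine max_lt one_pos ?_
      have : 0 < s / r := div_pos hspos hr
      linarith
  refine ⟨?_, hmem, ?_, hstar0, ?_⟩
  · -- strict concavity
    constructor
    · exact convex_Ico 0 1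
    · rintro x ⟨hx0, hx1⟩ y ⟨hy0, hy1⟩ hxy a b ha hb hab
      simp only [smul_eq_mul, J]
      have hp : 0 < 1 - x := by linarith
      have hq : 0 < 1 - y := by linarith
      have hc : 0 < 1 - (a * x + b * y) := by nlinarith
      have key : 1 / (1 - (a * x + b * y)) < a / (1 - x) + b / (1 - y) := by
        rw [div_add_div _ _ hp.ne' hq.ne', div_lt_div_iff₀ hc (mul_pos hp hq)]
        have hxy0 : x - y ≠ 0 := sub_ne_zero.mpr hxy
        have hxy' : 0 < (x - y) ^ 2 := by positivity
        have hb' : b = 1 - a := by linarith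
        subst hb'
        nlinarith [mul_pos (mul_pos ha hb) hxy']
      have hiden : (a * x + b * y) * r ^ 2 - κ * (1 / (1 - (a * x + b * y)) - 1) -
          (a * (x * r ^ 2 - κ * (1 / (1 - x) - 1)) + b * (y * r ^ 2 - κ * (1 / (1 - y) - 1)))
          = κ * ((a / (1 - x) + b / (1 - y)) - 1 / (1 - (a * x + b * y))) + κ * (1 - (a + b)) := by
        ring
      have hppos : 0 < κ * ((a / (1 - x) + b / (1 - y)) - 1 / (1 - (a * x + b * y))) :=
        mul_pos hκ (by linarith)
      have h0 : κ * (1 - (a + b)) = 0 := by rw [hab]; ring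
      linarith [hiden, hppos, h0]
  · -- unique maximizer
    intro η ⟨hη0, hη1⟩ hne
    have hu : 0 < 1 - η := by linarith
    rcases le_or_gt r s with h | h
    · rw [hstar0 h] at hne ⊢
      have hηpos : 0 < η := lt_of_le_of_ne hη0 (Ne.symm hne)
      have hr2 : r ^ 2 ≤ κ := by
        rw [hκs]; exact pow_le_pow_left₀ hr.le h 2
      have hC : κ * (1 / (1 - η) - 1) = κ * η / (1 - η) := by
        field_simp
        ring
      show η * r ^ 2 - κ * (1 / (1 - η) - 1) < 0 * r ^ 2 - κ * (1 / (1 - 0) - 1)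
      rw [hC]
      have hA : η * (1 - η) * r ^ 2 ≤ η * (1 - η) * κ :=
        mul_le_mul_of_nonneg_left hr2 (by positivity)
      have hB : 0 < κ * η ^ 2 := by positivity
      have : η * r ^ 2 * (1 - η) < κ * η := by nlinarith [hA, hB]
      rw [show (0:ℝ) * r ^ 2 - κ * (1 / (1 - 0) - 1) = 0 by norm_num]
      rw [sub_neg, lt_div_iff₀ hu]
      linarith
    · rw [hstar1 h] at hne ⊢
      have hsr : 0 < s / r := div_pos hspos hr
      have hne' : (1 - η) * r - s ≠ 0 := by
        intro h0
        apply hne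
        have h1 : 1 - η = s / r := by rw [eq_div_iff hr.ne']; linarith
        linarith
      have hdiff : J (1 - s / r) - J η = ((1 - η) * r - s) ^ 2 / (1 - η) := by
        show (1 - s / r) * r ^ 2 - κ * (1 / (1 - (1 - s / r)) - 1) -
          (η * r ^ 2 - κ * (1 / (1 - η) - 1)) = _
        rw [hκs]
        have := hspos.ne'
        field_simp
        ring_nf
        rw [show r * s ^ 2 * s⁻¹ = r * s by rw [pow_two, ← mul_assoc, mul_inv_cancel_right₀ this]]
        ring
      have hpos : 0 < ((1 - η) * r - s) ^ 2 / (1 - η) := by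
        apply div_pos _ hu
        positivity
      linarith [hdiff, hpos]
  · intro h
    refine ⟨hstar1 h, ?_, hmem.2⟩
    rw [hstar1 h]
    have h1 : s / r < 1 := (div_lt_one hr).mpr h
    linarith
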